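/- Let (Ω, μ) be a measure space and let p_s, p_t, p_sub : Ω → ℝ≥0 be measurable probability densities with respect to μ (each integrating to 1). Let φ : Ω → ℝ be measurable with 0 ≤ φ(ω) ≤ C for all ω, where C ≥ 0 is a constant (Assumption 1, with φ = −log p̂). Assume ∫ p_sub φ dμ ≤ ∫ p_s φ dμ (Assumption 2, that the target subnetwork is superior to the source network on the target data). Then ∫ p_t φ dμ ≤ ∫ p_s φ dμ + C·√(2·D_JS(p_t·μ ‖ p_sub·μ)), where D_JS denotes the Jensen–Shannon divergence. (This is the core inequality of the paper's Theorem 1: the target loss is bounded by the source loss plus C√(2 D_JS) between the target and subnetwork distributions.) -/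

import Mathlib

open MeasureTheory ProbabilityTheory
open scoped NNReal ENNReal Classical

/-- The Kullback–Leibler divergence `KL(P‖Q)` of two measures: the integral of the
log-likelihood ratio `log (dP/dQ)` with respect to `P` when `P ≪ Q` and this
log-likelihood ratio is integrable, and `∞` otherwise. -/
noncomputable def klDiv {Ω : Type*} [MeasurableSpace Ω] (P Q : Measure Ω) : ℝ≥0∞ :=
  if P ≪ Q ∧ Integrable (llr P Q) P then ENNReal.ofReal (∫ ω, llr P Q ω ∂P) else ⊤

/-- The Jensen–Shannon divergence `D_JS(P‖Q) = ½·KL(P‖M) + ½·KL(Q‖M)`,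
where `M = ½(P + Q)`. -/
noncomputable def jsDiv {Ω : Type*} [MeasurableSpace Ω] (P Q : Measure Ω) : ℝ≥0∞ :=
  klDiv P ((2 : ℝ≥0∞)⁻¹ • (P + Q)) / 2 + klDiv Q ((2 : ℝ≥0∞)⁻¹ • (P + Q)) / 2

section Aux
open Real

/-- Pointwise key inequality for Pinsker: `3(x-1)²/(2(x+2)) ≤ x log x - x + 1` for `x ≥ 0`. -/
lemma key_one_dim {x : ℝ} (hx : 0 ≤ x) :
    3 * (x - 1) ^ 2 / (2 * (x + 2)) ≤ x * Real.log x - x + 1 := by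
  set G : ℝ → ℝ := fun x => Real.log x - 3 * (x - 1) * (x + 5) / (2 * (x + 2) ^ 2) with hGdef
  set F : ℝ → ℝ := fun x => x * Real.log x - x + 1 - 3 * (x - 1) ^ 2 / (2 * (x + 2)) with hFdef
  have hG : ∀ y : ℝ, 0 < y →
      HasDerivAt G ((y - 1) ^ 2 * (y + 8) / (y * (y + 2) ^ 3)) y := by
    intro y hy
    have hd : ((2 : ℝ) * (y + 2) ^ 2) ≠ 0 := by positivity
    have h1 := (((hasDerivAt_id y).sub_const 1).const_mul 3).mul ((hasDerivAt_id y).add_const 5)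
    have h2 := (((hasDerivAt_id y).add_const 2).pow 2).const_mul 2
    have h3 := (Real.hasDerivAt_log (ne_of_gt hy)).sub ((h1.div h2) hd)
    simp only [id_eq, mul_one, one_mul] at h3
    refine h3.congr_deriv ?_
    simp only [Pi.pow_apply, Pi.mul_apply]
    field_simp
    ring
  have hF : ∀ y : ℝ, 0 < y → HasDerivAt F (G y) y := by
    intro y hy
    have hd : ((2 : ℝ) * (y + 2)) ≠ 0 := by positivity
    have h1 := (hasDerivAt_id y).mul (Real.hasDerivAt_log (ne_of_gt hy))
    have h2 := (((hasDerivAt_id y).sub_const 1).pow 2).const_mul 3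
    have h3 := ((hasDerivAt_id y).add_const 2).const_mul 2
    have h4 := ((h1.sub (hasDerivAt_id y)).add_const 1).sub ((h2.div h3) hd)
    simp only [id_eq, mul_one, one_mul] at h4
    refine h4.congr_deriv ?_
    symm
    simp only [hGdef, Pi.pow_apply]
    rw [mul_inv_cancel₀ (ne_of_gt hy)]
    field_simp
    ring
  have hGcont : ContinuousOn G (Set.Ioi 0) := fun y hy =>
    (hG y hy).continuousAt.continuousWithinAt
  have hGmono : MonotoneOn G (Set.Ioi 0) := by
    apply monotoneOn_of_deriv_nonneg (convex_Ioi 0) hGcont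
    · intro y hy
      rw [interior_Ioi] at hy
      exact ((hG y hy).differentiableAt).differentiableWithinAt
    · intro y hy
      rw [interior_Ioi] at hy
      rw [(hG y hy).deriv]
      have : (0:ℝ) < y := hy
      positivity
  have hG1 : G 1 = 0 := by simp [hGdef]
  have hFcont : ContinuousOn F (Set.Ioi 0) := fun y hy =>
    (hF y hy).continuousAt.continuousWithinAt
  have hF1 : F 1 = 0 := by norm_num [hFdef]
  -- two monotonicity regimes
  have hFpos : ∀ y : ℝ, 0 < y → 0 ≤ F y := by
    intro y hy
    rcases le_total y 1 with h1 | h1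
    · -- F antitone on Ioc 0 1
      have hanti : AntitoneOn F (Set.Ioc 0 1) := by
        apply antitoneOn_of_deriv_nonpos (convex_Ioc 0 1)
          (hFcont.mono (by intro z hz; exact hz.1))
        · intro z hz
          rw [interior_Ioc] at hz
          exact ((hF z hz.1).differentiableAt).differentiableWithinAt
        · intro z hz
          rw [interior_Ioc] at hz
          rw [(hF z hz.1).deriv]
          have := hGmono (Set.mem_Ioi.2 hz.1) (Set.mem_Ioi.2 one_pos) hz.2.le
          linarith [hG1 ▸ this]
      have := hanti (Set.mem_Ioc.2 ⟨hy, h1⟩) (Set.mem_Ioc.2 ⟨one_pos, le_refl 1⟩) h1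
      linarith [hF1 ▸ this]
    · -- F monotone on Ici 1
      have hmono : MonotoneOn F (Set.Ici 1) := by
        apply monotoneOn_of_deriv_nonneg (convex_Ici 1)
          (hFcont.mono (by intro z hz; exact lt_of_lt_of_le one_pos (Set.mem_Ici.1 hz)))
        · intro z hz
          rw [interior_Ici] at hz
          exact ((hF z (lt_trans one_pos hz)).differentiableAt).differentiableWithinAt
        · intro z hz
          rw [interior_Ici] at hz
          rw [(hF z (lt_trans one_pos hz)).deriv]
          have := hGmono (Set.mem_Ioi.2 one_pos) (Set.mem_Ioi.2 (lt_trans one_pos hz)) hz.le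
          linarith [hG1 ▸ this]
      have := hmono (Set.mem_Ici.2 (le_refl 1)) (Set.mem_Ici.2 h1) h1
      linarith [hF1 ▸ this]
  rcases eq_or_lt_of_le hx with h | h
  · simp [← h]
    norm_num
  · have := hFpos x h
    simp only [hFdef] at this
    linarith

/-- Scaled pointwise key inequality. -/
lemma key_scaled {f g : ℝ} (hf : 0 ≤ f) (hg : 0 ≤ g) (hfg : f ≤ 2 * g) :
    3 * (f - g) ^ 2 / (2 * (f + 2 * g)) ≤ f * Real.log (f / g) - f + g := by
  rcases eq_or_lt_of_le hg with h | h
  · have hf0 : f = 0 := le_antisymm (by linarith) hf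
    simp [hf0, ← h]
  · have hx := key_one_dim (div_nonneg hf h.le)
    have h2 := mul_le_mul_of_nonneg_left hx h.le
    have hgne : g ≠ 0 := ne_of_gt h
    have e1 : g * ((f / g) * Real.log (f / g) - f / g + 1)
        = f * Real.log (f / g) - f + g := by field_simp
    have e2 : g * (3 * (f / g - 1) ^ 2 / (2 * (f / g + 2)))
        = 3 * (f - g) ^ 2 / (2 * (f + 2 * g)) := by
      have h1 : f / g + 2 ≠ 0 := by positivity
      have h2 : f + 2 * g ≠ 0 := by positivity
      field_simp
    rw [← e1, ← e2]
    exact h2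

lemma abs_mul_log_le_two {x : ℝ} (h0 : 0 ≤ x) (h2 : x ≤ 2) : |x * Real.log x| ≤ 2 := by
  rcases le_or_gt x 1 with h1 | h1
  · rcases eq_or_lt_of_le h0 with h | h
    · simp [← h]
    · have := Real.abs_log_mul_self_lt x h h1
      rw [abs_mul] at this ⊢
      rw [mul_comm] at this
      linarith [this]
  · have hlog0 : 0 ≤ Real.log x := Real.log_nonneg h1.le
    have hlog : Real.log x ≤ x - 1 := Real.log_le_sub_one_of_pos (by linarith)
    rw [abs_of_nonneg (by positivity)]
    nlinarith

/-- pointwise bound for integrability of `f log (f/g)` -/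
lemma abs_mul_log_div_le {f g : ℝ} (hf : 0 ≤ f) (hg : 0 ≤ g) (hfg : f ≤ 2 * g) :
    |f * Real.log (f / g)| ≤ 2 * g := by
  rcases eq_or_lt_of_le hg with h | h
  · have hf0 : f = 0 := le_antisymm (by linarith) hf
    simp [hf0, ← h]
  · have hgne : g ≠ 0 := ne_of_gt h
    have hx0 : 0 ≤ f / g := div_nonneg hf h.le
    have hx2 : f / g ≤ 2 := by rw [div_le_iff₀ h]; linarith
    have := abs_mul_log_le_two hx0 hx2
    have e : f * Real.log (f / g) = g * ((f / g) * Real.log (f / g)) := by field_simp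
    rw [e, abs_mul, abs_of_nonneg h.le]
    calc g * |f / g * Real.log (f / g)| ≤ g * 2 := by
          exact mul_le_mul_of_nonneg_left this h.le
      _ = 2 * g := by ring

/-- Pinsker-type inequality at the level of densities. -/
lemma pinsker_densities {Ω : Type*} [MeasurableSpace Ω] (μ : Measure Ω) (f g : Ω → ℝ)
    (hfm : Measurable f) (hgm : Measurable g)
    (hf0 : ∀ ω, 0 ≤ f ω) (hg0 : ∀ ω, 0 ≤ g ω) (hfg : ∀ ω, f ω ≤ 2 * g ω)
    (hfi : Integrable f μ) (hgi : Integrable g μ)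
    (hf1 : ∫ ω, f ω ∂μ = 1) (hg1 : ∫ ω, g ω ∂μ = 1) :
    (∫ ω, |f ω - g ω| ∂μ) ^ 2 ≤ 2 * ∫ ω, f ω * Real.log (f ω / g ω) ∂μ := by
  set e : Ω → ℝ := fun ω => 3 * (f ω - g ω) ^ 2 / (2 * (f ω + 2 * g ω)) with hedef
  set h : Ω → ℝ := fun ω => f ω * Real.log (f ω / g ω) - f ω + g ω with hhdef
  set K : ℝ := ∫ ω, f ω * Real.log (f ω / g ω) ∂μ with hKdef
  have he0 : ∀ ω, 0 ≤ e ω := fun ω => by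
    have := hf0 ω; have := hg0 ω; positivity
  have hkey : ∀ ω, e ω ≤ h ω := fun ω => key_scaled (hf0 ω) (hg0 ω) (hfg ω)
  have hlm : Measurable fun ω => f ω * Real.log (f ω / g ω) :=
    hfm.mul ((hfm.div hgm).log)
  have hli : Integrable (fun ω => f ω * Real.log (f ω / g ω)) μ := by
    refine Integrable.mono' (hgi.const_mul 2) hlm.aestronglyMeasurable ?_
    exact Filter.Eventually.of_forall fun ω =>
      abs_mul_log_div_le (hf0 ω) (hg0 ω) (hfg ω)
  have hhi : Integrable h μ := (hli.sub hfi).add hgi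
  have hem : Measurable e := by
    apply Measurable.div
    · exact ((hfm.sub hgm).pow_const 2).const_mul 3
    · exact (hfm.add (hgm.const_mul 2)).const_mul 2
  have hei : Integrable e μ := by
    refine Integrable.mono' hhi hem.aestronglyMeasurable ?_
    exact Filter.Eventually.of_forall fun ω => by
      rw [Real.norm_eq_abs, abs_of_nonneg (he0 ω)]; exact hkey ω
  have hIh : ∫ ω, h ω ∂μ = K := by
    have h1 : ∫ ω, (f ω * Real.log (f ω / g ω) - f ω) ∂μ = K - 1 := by
      rw [integral_sub hli hfi, hf1, ← hKdef]
    have hsubi : Integrable (fun ω => f ω * Real.log (f ω / g ω) - f ω) μ := hli.sub hfi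
    have h2 : ∫ ω, (f ω * Real.log (f ω / g ω) - f ω + g ω) ∂μ
        = (∫ ω, (f ω * Real.log (f ω / g ω) - f ω) ∂μ) + ∫ ω, g ω ∂μ :=
      integral_add hsubi hgi
    have h3 : ∫ ω, h ω ∂μ = (K - 1) + 1 := by rw [← h1, ← hg1]; exact h2
    rw [h3]; ring
  have hIeK : ∫ ω, e ω ∂μ ≤ K := by
    rw [← hIh]; exact integral_mono hei hhi hkey
  have hIe0 : 0 ≤ ∫ ω, e ω ∂μ := integral_nonneg he0
  have hK0 : 0 ≤ K := le_trans hIe0 hIeK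
  -- Cauchy–Schwarz
  set u : Ω → ℝ := fun ω => Real.sqrt (e ω) with hudef
  set v : Ω → ℝ := fun ω => Real.sqrt (2 * (f ω + 2 * g ω) / 3) with hvdef
  have hvsq : ∀ ω, v ω ^ 2 = 2 * (f ω + 2 * g ω) / 3 := fun ω => by
    rw [hvdef]
    exact Real.sq_sqrt (by have := hf0 ω; have := hg0 ω; positivity)
  have husq : ∀ ω, u ω ^ 2 = e ω := fun ω => Real.sq_sqrt (he0 ω)
  have huv : ∀ ω, u ω * v ω = |f ω - g ω| := by
    intro ω
    by_cases hz : f ω + 2 * g ω = 0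
    · have hfz : f ω = 0 := le_antisymm (by have := hg0 ω; linarith) (hf0 ω)
      have hgz : g ω = 0 := by have := hf0 ω; have := hg0 ω; linarith
      simp [hudef, hvdef, hedef, hfz, hgz]
    · rw [hudef, hvdef, ← Real.sqrt_mul (he0 ω)]
      have : e ω * (2 * (f ω + 2 * g ω) / 3) = (f ω - g ω) ^ 2 := by
        rw [hedef]; field_simp
        exact mul_div_cancel_right₀ _ (by contrapose! hz; linarith)
      rw [this, Real.sqrt_sq_eq_abs]
  -- integrability of squares
  have hvi : Integrable (fun ω => v ω ^ 2) μ := by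
    have : Integrable (fun ω => 2 * (f ω + 2 * g ω) / 3) μ :=
      ((hfi.add (hgi.const_mul 2)).const_mul 2).div_const 3
    exact this.congr (Filter.Eventually.of_forall fun ω => (hvsq ω).symm)
  have hui : Integrable (fun ω => u ω ^ 2) μ :=
    hei.congr (Filter.Eventually.of_forall fun ω => (husq ω).symm)
  have hum : Measurable u := hem.sqrt
  have hvm : Measurable v := ((((hfm.add (hgm.const_mul 2)).const_mul 2)).div_const 3).sqrt
  have huL2 : MemLp u (ENNReal.ofReal 2) μ := by
    rw [show ENNReal.ofReal 2 = 2 by norm_num]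
    exact (memLp_two_iff_integrable_sq hum.aestronglyMeasurable).2 hui
  have hvL2 : MemLp v (ENNReal.ofReal 2) μ := by
    rw [show ENNReal.ofReal 2 = 2 by norm_num]
    exact (memLp_two_iff_integrable_sq hvm.aestronglyMeasurable).2 hvi
  have hpq : Real.HolderConjugate 2 2 := Real.HolderConjugate.two_two
  have hCS := integral_mul_le_Lp_mul_Lq_of_nonneg hpq
    (Filter.Eventually.of_forall fun ω => Real.sqrt_nonneg _)
    (Filter.Eventually.of_forall fun ω => Real.sqrt_nonneg _) huL2 hvL2
  -- rewrite rpow 2 as pow 2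
  have hrp : ∀ y : ℝ, 0 ≤ y → y ^ (2:ℝ) = y ^ 2 := fun y hy => by
    rw [show (2:ℝ) = ((2:ℕ):ℝ) by norm_num, Real.rpow_natCast]
  have hCS' : ∫ ω, u ω * v ω ∂μ ≤
      (∫ ω, u ω ^ 2 ∂μ) ^ ((1:ℝ)/2) * (∫ ω, v ω ^ 2 ∂μ) ^ ((1:ℝ)/2) := by
    have e1 : ∫ ω, u ω ^ (2:ℝ) ∂μ = ∫ ω, u ω ^ 2 ∂μ :=
      integral_congr_ae (Filter.Eventually.of_forall fun ω => hrp _ (Real.sqrt_nonneg _))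
    have e2 : ∫ ω, v ω ^ (2:ℝ) ∂μ = ∫ ω, v ω ^ 2 ∂μ :=
      integral_congr_ae (Filter.Eventually.of_forall fun ω => hrp _ (Real.sqrt_nonneg _))
    calc ∫ ω, u ω * v ω ∂μ
        ≤ (∫ ω, u ω ^ (2:ℝ) ∂μ) ^ ((1:ℝ)/2) * (∫ ω, v ω ^ (2:ℝ) ∂μ) ^ ((1:ℝ)/2) := hCS
      _ = _ := by rw [e1, e2]
  have hIv : ∫ ω, v ω ^ 2 ∂μ = 2 := by
    have : ∫ ω, v ω ^ 2 ∂μ = ∫ ω, 2 * (f ω + 2 * g ω) / 3 ∂μ :=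
      integral_congr_ae (Filter.Eventually.of_forall fun ω => hvsq ω)
    rw [this]
    have e0 : ∫ ω, (f ω + 2 * g ω) ∂μ = (∫ ω, f ω ∂μ) + ∫ ω, 2 * g ω ∂μ :=
      integral_add hfi (hgi.const_mul 2)
    have e1 : ∫ ω, 2 * (f ω + 2 * g ω) / 3 ∂μ
        = 2 * (∫ ω, (f ω + 2 * g ω) ∂μ) / 3 := by
      rw [integral_div, integral_const_mul]
    rw [e1, e0, integral_const_mul, hf1, hg1]; norm_num
  have hIu : ∫ ω, u ω ^ 2 ∂μ = ∫ ω, e ω ∂μ :=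
    integral_congr_ae (Filter.Eventually.of_forall fun ω => husq ω)
  have hIuv : ∫ ω, |f ω - g ω| ∂μ = ∫ ω, u ω * v ω ∂μ :=
    integral_congr_ae (Filter.Eventually.of_forall fun ω => (huv ω).symm)
  have hD0 : 0 ≤ ∫ ω, |f ω - g ω| ∂μ := integral_nonneg fun ω => abs_nonneg _
  have hbound : ∫ ω, |f ω - g ω| ∂μ ≤ Real.sqrt K * Real.sqrt 2 := by
    rw [hIuv]
    refine le_trans hCS' ?_
    rw [hIv, hIu, Real.sqrt_eq_rpow, Real.sqrt_eq_rpow]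
    exact mul_le_mul_of_nonneg_right (Real.rpow_le_rpow hIe0 hIeK (by norm_num))
      (Real.rpow_nonneg (by norm_num) _)
  calc (∫ ω, |f ω - g ω| ∂μ) ^ 2 ≤ (Real.sqrt K * Real.sqrt 2) ^ 2 :=
        pow_le_pow_left₀ hD0 hbound 2
    _ = K * 2 := by
        rw [mul_pow, Real.sq_sqrt hK0, Real.sq_sqrt (by norm_num : (0:ℝ) ≤ 2)]
    _ = 2 * K := by ring

section klHelper
variable {Ω : Type*} [MeasurableSpace Ω] (μ : Measure Ω) (p q : Ω → ℝ≥0)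

/-- Integrability of the real density. -/
lemma integrable_coe_nnreal (hp : Measurable p)
    (hp1 : ∫⁻ ω, (p ω : ℝ≥0∞) ∂μ = 1) : Integrable (fun ω => (p ω : ℝ)) μ := by
  refine ⟨(hp.coe_nnreal_real).aestronglyMeasurable, ?_⟩
  rw [hasFiniteIntegral_def]
  have e : ∀ ω, (‖(p ω : ℝ)‖ₑ : ℝ≥0∞) = (p ω : ℝ≥0∞) := fun ω => by
    rw [Real.enorm_eq_ofReal (p ω).coe_nonneg, ENNReal.ofReal_coe_nnreal]
  simp only [e]
  rw [hp1]
  exact ENNReal.one_lt_top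

lemma integral_coe_nnreal_eq_one (hp : Measurable p)
    (hp1 : ∫⁻ ω, (p ω : ℝ≥0∞) ∂μ = 1) : ∫ ω, (p ω : ℝ) ∂μ = 1 := by
  rw [integral_eq_lintegral_of_nonneg_ae (Filter.Eventually.of_forall fun ω => (p ω).coe_nonneg)
    (hp.coe_nnreal_real).aestronglyMeasurable]
  simp only [ENNReal.ofReal_coe_nnreal]
  rw [hp1]; rfl

/-- The KL divergence of `p·μ` from the mixture `½(p+q)·μ`. -/
lemma klDiv_mixture_eq (hp : Measurable p) (hq : Measurable q)
    (hp1 : ∫⁻ ω, (p ω : ℝ≥0∞) ∂μ = 1) (hq1 : ∫⁻ ω, (q ω : ℝ≥0∞) ∂μ = 1) :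
    klDiv (μ.withDensity fun ω => (p ω : ℝ≥0∞))
        (μ.withDensity fun ω => (2:ℝ≥0∞)⁻¹ * ((p ω : ℝ≥0∞) + (q ω : ℝ≥0∞)))
      = ENNReal.ofReal
        (∫ ω, (p ω : ℝ) * Real.log ((p ω : ℝ) / (((p ω : ℝ) + (q ω : ℝ)) / 2)) ∂μ) := by
  set mE : Ω → ℝ≥0∞ := fun ω => (2:ℝ≥0∞)⁻¹ * ((p ω : ℝ≥0∞) + (q ω : ℝ≥0∞)) with hmEdef
  set mR : Ω → ℝ := fun ω => ((p ω : ℝ) + (q ω : ℝ)) / 2 with hmRdef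
  set P : Measure Ω := μ.withDensity fun ω => (p ω : ℝ≥0∞) with hPdef
  set M : Measure Ω := μ.withDensity mE with hMdef
  have hmE_meas : Measurable mE := ((hp.coe_nnreal_ennreal.add hq.coe_nnreal_ennreal).const_mul _)
  have hmE_ne_top : ∀ ω, mE ω ≠ ∞ := fun ω => by
    simp [hmEdef]
    exact ENNReal.mul_ne_top (by norm_num) (by simp)
  have hdiv_meas : Measurable fun ω => (p ω : ℝ≥0∞) / mE ω :=
    hp.coe_nnreal_ennreal.div hmE_meas
  -- P as density against M
  have hPM_eq : M.withDensity (fun ω => (p ω : ℝ≥0∞) / mE ω) = P := by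
    rw [hMdef, ← withDensity_mul μ hmE_meas hdiv_meas, hPdef]
    congr 1
    funext ω
    by_cases h0 : mE ω = 0
    · have h2 : (p ω : ℝ≥0∞) + (q ω : ℝ≥0∞) = 0 := by
        have h3 : (2:ℝ≥0∞) * mE ω = (p ω : ℝ≥0∞) + (q ω : ℝ≥0∞) := by
          rw [hmEdef]; dsimp only
          rw [← mul_assoc, ENNReal.mul_inv_cancel two_ne_zero (by norm_num), one_mul]
        rw [← h3, h0, mul_zero]
      have hp0 : (p ω : ℝ≥0∞) = 0 := (add_eq_zero.1 h2).1
      simp [h0, hp0]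
    · exact ENNReal.mul_div_cancel h0 (hmE_ne_top ω)
  have hPM : P ≪ M := hPM_eq ▸ withDensity_absolutelyContinuous M _
  have hMfin : IsFiniteMeasure M := by
    constructor
    rw [hMdef, withDensity_apply _ MeasurableSet.univ, setLIntegral_univ]
    have : ∫⁻ ω, mE ω ∂μ = (2:ℝ≥0∞)⁻¹ * ((∫⁻ ω, (p ω : ℝ≥0∞) ∂μ) + ∫⁻ ω, (q ω : ℝ≥0∞) ∂μ) := by
      rw [← lintegral_add_left hp.coe_nnreal_ennreal, ← lintegral_const_mul (f := fun a => (p a : ℝ≥0∞) + (q a : ℝ≥0∞)) _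
        (hp.coe_nnreal_ennreal.add hq.coe_nnreal_ennreal)]
    rw [this, hp1, hq1]
    exact ENNReal.mul_lt_top (by norm_num) (by norm_num)
  have hrn : P.rnDeriv M =ᵐ[M] fun ω => (p ω : ℝ≥0∞) / mE ω := by
    rw [← hPM_eq]
    exact Measure.rnDeriv_withDensity M hdiv_meas
  have hrnP : P.rnDeriv M =ᵐ[P] fun ω => (p ω : ℝ≥0∞) / mE ω := hrn.filter_mono hPM.ae_le
  have hmE_toReal : ∀ ω, (mE ω).toReal = mR ω := fun ω => by
    simp [hmEdef, hmRdef, ENNReal.toReal_mul, ENNReal.toReal_add, ENNReal.toReal_inv]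
    ring
  have hllr : llr P M =ᵐ[P] fun ω => Real.log ((p ω : ℝ) / mR ω) := by
    filter_upwards [hrnP] with ω hω
    rw [llr_def]
    simp only [hω, ENNReal.toReal_div, hmE_toReal ω, ENNReal.coe_toReal]
  -- pointwise facts about real densities
  have hple : ∀ ω, (p ω : ℝ) ≤ 2 * mR ω := fun ω => by
    have := (q ω).coe_nonneg
    rw [hmRdef]; dsimp only; linarith
  have hmR0 : ∀ ω, 0 ≤ mR ω := fun ω => by
    have := (p ω).coe_nonneg; have := (q ω).coe_nonneg
    rw [hmRdef]; dsimp only; linarith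
  have hbound : ∀ ω, ‖(p ω : ℝ) * Real.log ((p ω : ℝ) / mR ω)‖ ≤ 2 * mR ω := fun ω =>
    abs_mul_log_div_le (p ω).coe_nonneg (hmR0 ω) (hple ω)
  have hmR_meas : Measurable mR := ((hp.coe_nnreal_real.add hq.coe_nnreal_real).div_const 2)
  have hmR_int : Integrable mR μ := by
    have h1 := integrable_coe_nnreal μ p hp hp1
    have h2 := integrable_coe_nnreal μ q hq hq1
    exact (h1.add h2).div_const 2
  have hint_mu : Integrable (fun ω => (p ω : ℝ) * Real.log ((p ω : ℝ) / mR ω)) μ := by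
    refine Integrable.mono' (hmR_int.const_mul 2)
      ((hp.coe_nnreal_real.mul ((hp.coe_nnreal_real.div hmR_meas).log)).aestronglyMeasurable)
      (Filter.Eventually.of_forall hbound)
  have hint_log : Integrable (fun ω => Real.log ((p ω : ℝ) / mR ω)) P := by
    rw [hPdef]
    rw [integrable_withDensity_iff_integrable_smul hp]
    refine hint_mu.congr (Filter.Eventually.of_forall fun ω => ?_)
    simp [NNReal.smul_def]
  have hint : Integrable (llr P M) P := (integrable_congr hllr).2 hint_log
  have hI : ∫ ω, llr P M ω ∂P
      = ∫ ω, (p ω : ℝ) * Real.log ((p ω : ℝ) / mR ω) ∂μ := by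
    rw [integral_congr_ae hllr, hPdef, integral_withDensity_eq_integral_smul hp]
    exact integral_congr_ae (Filter.Eventually.of_forall fun ω => by simp [NNReal.smul_def])
  rw [klDiv, if_pos ⟨hPM, hint⟩, hI]
end klHelper

end Aux

/-- **Core inequality of Theorem 1 (RAIN paper).** Let `p_s, p_t, p_sub` be measurable
probability densities on `(Ω, μ)` and let `φ : Ω → ℝ` (standing for `−log p̂`) be
measurable with `0 ≤ φ ≤ C` (Assumption 1). If `∫ p_sub·φ dμ ≤ ∫ p_s·φ dμ`
(Assumption 2: the target subnetwork is superior to the source network), then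
`∫ p_t·φ dμ ≤ ∫ p_s·φ dμ + C·√(2·D_JS(p_t·μ ‖ p_sub·μ))`. -/
theorem target_loss_le_source_loss_add_js
    {Ω : Type*} [MeasurableSpace Ω] (μ : Measure Ω)
    (ps pt psub : Ω → ℝ≥0)
    (hps : Measurable ps) (hpt : Measurable pt) (hpsub : Measurable psub)
    (hps1 : ∫⁻ ω, (ps ω : ℝ≥0∞) ∂μ = 1)
    (hpt1 : ∫⁻ ω, (pt ω : ℝ≥0∞) ∂μ = 1)
    (hpsub1 : ∫⁻ ω, (psub ω : ℝ≥0∞) ∂μ = 1)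
    (φ : Ω → ℝ) (hφ : Measurable φ)
    (C : ℝ) (hC : 0 ≤ C) (hφ0 : ∀ ω, 0 ≤ φ ω) (hφC : ∀ ω, φ ω ≤ C)
    (hsub : ∫ ω, (psub ω : ℝ) * φ ω ∂μ ≤ ∫ ω, (ps ω : ℝ) * φ ω ∂μ) :
    ∫ ω, (pt ω : ℝ) * φ ω ∂μ
      ≤ ∫ ω, (ps ω : ℝ) * φ ω ∂μ
        + C * Real.sqrt (2 * (jsDiv (μ.withDensity (fun ω => (pt ω : ℝ≥0∞)))
            (μ.withDensity (fun ω => (psub ω : ℝ≥0∞)))).toReal) := by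
  classical
  set A : Ω → ℝ := fun ω => (pt ω : ℝ) with hAdef
  set B : Ω → ℝ := fun ω => (psub ω : ℝ) with hBdef
  set mR : Ω → ℝ := fun ω => (A ω + B ω) / 2 with hmRdef
  have hAm : Measurable A := hpt.coe_nnreal_real
  have hBm : Measurable B := hpsub.coe_nnreal_real
  have hmRm : Measurable mR := (hAm.add hBm).div_const 2
  have hAi : Integrable A μ := integrable_coe_nnreal μ pt hpt hpt1
  have hBi : Integrable B μ := integrable_coe_nnreal μ psub hpsub hpsub1
  have hmRi : Integrable mR μ := (hAi.add hBi).div_const 2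
  have hA1 : ∫ ω, A ω ∂μ = 1 := integral_coe_nnreal_eq_one μ pt hpt hpt1
  have hB1 : ∫ ω, B ω ∂μ = 1 := integral_coe_nnreal_eq_one μ psub hpsub hpsub1
  have hmR1 : ∫ ω, mR ω ∂μ = 1 := by
    have : ∫ ω, mR ω ∂μ = (∫ ω, (A ω + B ω) ∂μ) / 2 := integral_div 2 _
    rw [this, integral_add hAi hBi, hA1, hB1]; norm_num
  have hA0 : ∀ ω, 0 ≤ A ω := fun ω => (pt ω).coe_nonneg
  have hB0 : ∀ ω, 0 ≤ B ω := fun ω => (psub ω).coe_nonneg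
  have hmR0 : ∀ ω, 0 ≤ mR ω := fun ω => by
    have := hA0 ω; have := hB0 ω
    rw [hmRdef]; dsimp only; linarith
  have hA2m : ∀ ω, A ω ≤ 2 * mR ω := fun ω => by
    have := hB0 ω; rw [hmRdef]; dsimp only; linarith
  have hB2m : ∀ ω, B ω ≤ 2 * mR ω := fun ω => by
    have := hA0 ω; rw [hmRdef]; dsimp only; linarith
  set K1 : ℝ := ∫ ω, A ω * Real.log (A ω / mR ω) ∂μ with hK1def
  set K2 : ℝ := ∫ ω, B ω * Real.log (B ω / mR ω) ∂μ with hK2def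
  set D : ℝ := ∫ ω, |A ω - mR ω| ∂μ with hDdef
  have hD0 : 0 ≤ D := integral_nonneg fun ω => abs_nonneg _
  -- Pinsker applied twice
  have hP1 : D ^ 2 ≤ 2 * K1 :=
    pinsker_densities μ A mR hAm hmRm hA0 hmR0 hA2m hAi hmRi hA1 hmR1
  have hP2 : D ^ 2 ≤ 2 * K2 := by
    have heq : ∫ ω, |B ω - mR ω| ∂μ = D := by
      refine integral_congr_ae (Filter.Eventually.of_forall fun ω => ?_)
      dsimp only
      rw [show B ω - mR ω = -(A ω - mR ω) by rw [hmRdef]; dsimp only; ring, abs_neg]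
    calc D ^ 2 = (∫ ω, |B ω - mR ω| ∂μ) ^ 2 := by rw [heq]
      _ ≤ 2 * K2 := pinsker_densities μ B mR hBm hmRm hB0 hmR0 hB2m hBi hmRi hB1 hmR1
  have hK10 : 0 ≤ K1 := by nlinarith
  have hK20 : 0 ≤ K2 := by nlinarith
  -- identify the mixture measure
  set P : Measure Ω := μ.withDensity fun ω => (pt ω : ℝ≥0∞) with hPdef
  set Q : Measure Ω := μ.withDensity fun ω => (psub ω : ℝ≥0∞) with hQdef
  have hM : (2:ℝ≥0∞)⁻¹ • (P + Q)
      = μ.withDensity (fun ω => (2:ℝ≥0∞)⁻¹ * ((pt ω : ℝ≥0∞) + (psub ω : ℝ≥0∞))) := by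
    have hadd : P + Q = μ.withDensity (fun ω => (pt ω : ℝ≥0∞) + (psub ω : ℝ≥0∞)) :=
      (withDensity_add_left hpt.coe_nnreal_ennreal _).symm
    have hsmul : (2:ℝ≥0∞)⁻¹ • μ.withDensity (fun ω => (pt ω : ℝ≥0∞) + (psub ω : ℝ≥0∞))
        = μ.withDensity (fun ω => (2:ℝ≥0∞)⁻¹ * ((pt ω : ℝ≥0∞) + (psub ω : ℝ≥0∞))) :=
      (withDensity_smul _ (hpt.coe_nnreal_ennreal.add hpsub.coe_nnreal_ennreal)).symm
    rw [hadd, hsmul]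
  have hKL1 := klDiv_mixture_eq μ pt psub hpt hpsub hpt1 hpsub1
  have hKL2 := klDiv_mixture_eq μ psub pt hpsub hpt hpsub1 hpt1
  have hcomm : (fun ω => (2:ℝ≥0∞)⁻¹ * ((psub ω : ℝ≥0∞) + (pt ω : ℝ≥0∞)))
      = (fun ω => (2:ℝ≥0∞)⁻¹ * ((pt ω : ℝ≥0∞) + (psub ω : ℝ≥0∞))) :=
    funext fun ω => by rw [add_comm ((psub ω : ℝ≥0∞))]
  rw [hcomm] at hKL2
  have hKL1' : klDiv P ((2:ℝ≥0∞)⁻¹ • (P + Q)) = ENNReal.ofReal K1 := by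
    rw [hM, hPdef, hKL1, hK1def]
  have hKL2' : klDiv Q ((2:ℝ≥0∞)⁻¹ • (P + Q)) = ENNReal.ofReal K2 := by
    rw [hM, hQdef, hKL2, hK2def]
    congr 1
    refine integral_congr_ae (Filter.Eventually.of_forall fun ω => ?_)
    dsimp only
    rw [hmRdef, hAdef, hBdef]
    dsimp only
    rw [add_comm ((psub ω : ℝ))]
  have hjs : (jsDiv P Q).toReal = K1 / 2 + K2 / 2 := by
    rw [jsDiv, hKL1', hKL2']
    rw [ENNReal.toReal_add (ENNReal.div_lt_top ENNReal.ofReal_ne_top two_ne_zero).ne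
      (ENNReal.div_lt_top ENNReal.ofReal_ne_top two_ne_zero).ne,
      ENNReal.toReal_div, ENNReal.toReal_div, ENNReal.toReal_ofReal hK10,
      ENNReal.toReal_ofReal hK20]
    norm_num
  have hDsqrt : D ≤ Real.sqrt (2 * (jsDiv P Q).toReal) := by
    have h2 : 2 * (jsDiv P Q).toReal = K1 + K2 := by rw [hjs]; ring
    have hD2 : D ^ 2 ≤ K1 + K2 := by nlinarith
    calc D = Real.sqrt (D ^ 2) := (Real.sqrt_sq hD0).symm
      _ ≤ Real.sqrt (K1 + K2) := Real.sqrt_le_sqrt hD2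
      _ = Real.sqrt (2 * (jsDiv P Q).toReal) := by rw [h2]
  -- step 1: the loss difference is bounded by C * D
  have hAφi : Integrable (fun ω => A ω * φ ω) μ := by
    refine Integrable.mono' (hAi.const_mul C) ((hAm.mul hφ).aestronglyMeasurable) ?_
    refine Filter.Eventually.of_forall fun ω => ?_
    rw [Real.norm_eq_abs, abs_mul, abs_of_nonneg (hA0 ω), abs_of_nonneg (hφ0 ω)]
    calc A ω * φ ω ≤ A ω * C := mul_le_mul_of_nonneg_left (hφC ω) (hA0 ω)
      _ = C * A ω := by ring
  have hBφi : Integrable (fun ω => B ω * φ ω) μ := by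
    refine Integrable.mono' (hBi.const_mul C) ((hBm.mul hφ).aestronglyMeasurable) ?_
    refine Filter.Eventually.of_forall fun ω => ?_
    rw [Real.norm_eq_abs, abs_mul, abs_of_nonneg (hB0 ω), abs_of_nonneg (hφ0 ω)]
    calc B ω * φ ω ≤ B ω * C := mul_le_mul_of_nonneg_left (hφC ω) (hB0 ω)
      _ = C * B ω := by ring
  have habsi : Integrable (fun ω => |A ω - B ω|) μ := (hAi.sub hBi).abs
  have habs2D : ∫ ω, |A ω - B ω| ∂μ = 2 * D := by
    rw [hDdef, ← integral_const_mul]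
    refine integral_congr_ae (Filter.Eventually.of_forall fun ω => ?_)
    dsimp only
    rw [show |A ω - B ω| = |2 * (A ω - mR ω)| by
      rw [hmRdef]; dsimp only; congr 1; ring]
    rw [abs_mul, abs_of_nonneg (by norm_num : (0:ℝ) ≤ 2)]
  have hstep1 : (∫ ω, A ω * φ ω ∂μ) - ∫ ω, B ω * φ ω ∂μ ≤ C * D := by
    have hptw : ∀ ω, A ω * φ ω - B ω * φ ω ≤ C * ((|A ω - B ω| + (A ω - B ω)) / 2) := by
      intro ω
      rcases le_total (B ω) (A ω) with h | h
      · rw [abs_of_nonneg (by linarith)]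
        have h1 : A ω * φ ω - B ω * φ ω = (A ω - B ω) * φ ω := by ring
        rw [h1]
        calc (A ω - B ω) * φ ω ≤ (A ω - B ω) * C :=
              mul_le_mul_of_nonneg_left (hφC ω) (by linarith)
          _ = C * ((A ω - B ω + (A ω - B ω)) / 2) := by ring
      · rw [abs_of_nonpos (by linarith)]
        have h1 : A ω * φ ω - B ω * φ ω = (A ω - B ω) * φ ω := by ring
        rw [h1]
        have : (A ω - B ω) * φ ω ≤ 0 :=
          mul_nonpos_of_nonpos_of_nonneg (by linarith) (hφ0 ω)
        calc (A ω - B ω) * φ ω ≤ 0 := this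
          _ = C * ((-(A ω - B ω) + (A ω - B ω)) / 2) := by ring
    have hLi : Integrable (fun ω => A ω * φ ω - B ω * φ ω) μ := hAφi.sub hBφi
    have hRi : Integrable (fun ω => C * ((|A ω - B ω| + (A ω - B ω)) / 2)) μ :=
      (((habsi.add (hAi.sub hBi)).div_const 2).const_mul C)
    have hIneq := integral_mono hLi hRi hptw
    have hL : ∫ ω, (A ω * φ ω - B ω * φ ω) ∂μ
        = (∫ ω, A ω * φ ω ∂μ) - ∫ ω, B ω * φ ω ∂μ := integral_sub hAφi hBφi
    have hR : ∫ ω, C * ((|A ω - B ω| + (A ω - B ω)) / 2) ∂μ = C * D := by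
      rw [integral_const_mul]
      have h1 : ∫ ω, (|A ω - B ω| + (A ω - B ω)) / 2 ∂μ
          = (∫ ω, (|A ω - B ω| + (A ω - B ω)) ∂μ) / 2 := integral_div 2 _
      have h2 : ∫ ω, (|A ω - B ω| + (A ω - B ω)) ∂μ
          = (∫ ω, |A ω - B ω| ∂μ) + ∫ ω, (A ω - B ω) ∂μ :=
        integral_add habsi (hAi.sub hBi)
      have h3 : ∫ ω, (A ω - B ω) ∂μ = 0 := by
        rw [integral_sub hAi hBi, hA1, hB1]; ring
      rw [h1, h2, h3, habs2D]
      ring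
    rw [hL] at hIneq
    rw [hR] at hIneq
    exact hIneq
  -- conclude
  have hfinal : ∫ ω, A ω * φ ω ∂μ
      ≤ (∫ ω, B ω * φ ω ∂μ) + C * Real.sqrt (2 * (jsDiv P Q).toReal) := by
    have := mul_le_mul_of_nonneg_left hDsqrt hC
    linarith
  calc ∫ ω, (pt ω : ℝ) * φ ω ∂μ
      ≤ (∫ ω, B ω * φ ω ∂μ) + C * Real.sqrt (2 * (jsDiv P Q).toReal) := hfinal
    _ ≤ (∫ ω, (ps ω : ℝ) * φ ω ∂μ) + C * Real.sqrt (2 * (jsDiv P Q).toReal) := by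
        exact add_le_add_left hsub _
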